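/- arXiv:1511.08086 — 2 statements merged into one kernel-verified Lean document; each statement's English description precedes it below -/
import Mathlib

section
/- Let G be a finite simple graph with no isolated vertex, and let H be a finite simple graph with domination number γ(H) ≥ 2. Then γ(G) ≤ γ(G[H]) ≤ γ(G) + ι(G), where ι(G) is the monitor number of G. -/
/-- The lexicographic product `G[H]` of two simple graphs: `(a, x)` is adjacent to
`(b, y)` iff `a` is adjacent to `b` in `G`, or `a = b` and `x` is adjacent to `y` in `H`. -/
def lexProd {α β : Type*} (G : SimpleGraph α) (H : SimpleGraph β) :
    SimpleGraph (α × β) where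
  Adj p q := G.Adj p.1 q.1 ∨ (p.1 = q.1 ∧ H.Adj p.2 q.2)
  symm := by
    constructor
    rintro ⟨a, x⟩ ⟨b, y⟩ (h | ⟨rfl, h⟩)
    · exact Or.inl h.symm
    · exact Or.inr ⟨rfl, h.symm⟩
  loopless := by
    constructor
    rintro ⟨a, x⟩ (h | ⟨-, h⟩)
    · exact G.loopless.irrefl a h
    · exact H.loopless.irrefl x h

/-- `S` is a dominating set of `G`: every vertex not in `S` is adjacent to a vertex of `S`. -/
def IsDomSet {α : Type*} (G : SimpleGraph α) (S : Finset α) : Prop :=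
  ∀ v, v ∉ S → ∃ u ∈ S, G.Adj u v

/-- The domination number `γ(G)`: the minimum cardinality of a dominating set of `G`. -/
noncomputable def gamma {α : Type*} [Fintype α] (G : SimpleGraph α) : ℕ :=
  sInf {n | ∃ S : Finset α, IsDomSet G S ∧ S.card = n}

/-- `U` is a monitor set of `D` in `G`: every vertex of `D` lies in the closed
neighborhood `N[U]` of `U`. -/
def IsMonitorSet {α : Type*} (G : SimpleGraph α) (U D : Finset α) : Prop :=
  ∀ v ∈ D, v ∈ U ∨ ∃ u ∈ U, G.Adj u v

/-- The monitor number `ι(D)` of a set `D`: the minimum cardinality of a monitor set of `D`. -/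
noncomputable def iotaSet {α : Type*} [Fintype α] (G : SimpleGraph α) (D : Finset α) : ℕ :=
  sInf {n | ∃ U : Finset α, IsMonitorSet G U D ∧ U.card = n}

/-- The monitor number `ι(G) = min {ι(D) : D is a γ-set of G}`. -/
noncomputable def iota {α : Type*} [Fintype α] (G : SimpleGraph α) : ℕ :=
  sInf {n | ∃ D : Finset α, IsDomSet G D ∧ D.card = gamma G ∧ iotaSet G D = n}

lemma gamma_set_nonempty {α : Type*} [Fintype α] (G : SimpleGraph α) :
    {n | ∃ S : Finset α, IsDomSet G S ∧ S.card = n}.Nonempty :=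
  ⟨Finset.univ.card, Finset.univ, fun v hv => absurd (Finset.mem_univ v) hv, rfl⟩

lemma exists_gamma_set {α : Type*} [Fintype α] (G : SimpleGraph α) :
    ∃ S : Finset α, IsDomSet G S ∧ S.card = gamma G :=
  Nat.sInf_mem (gamma_set_nonempty G)

lemma gamma_le_card {α : Type*} [Fintype α] (G : SimpleGraph α) {S : Finset α}
    (h : IsDomSet G S) : gamma G ≤ S.card :=
  Nat.sInf_le ⟨S, h, rfl⟩

/-- If `G` has no isolated vertex and `γ(H) ≥ 2`, then
`γ(G) ≤ γ(G[H]) ≤ γ(G) + ι(G)`. -/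
theorem gamma_lexProd_bounds {α β : Type*} [Fintype α] [Fintype β]
    (G : SimpleGraph α) (H : SimpleGraph β)
    (hG : ∀ v : α, ∃ u : α, G.Adj u v) (hH : 2 ≤ gamma H) :
    gamma G ≤ gamma (lexProd G H) ∧ gamma (lexProd G H) ≤ gamma G + iota G := by
  classical
  have hβ : Nonempty β := by
    by_contra h
    rw [not_nonempty_iff] at h
    have h0 : IsDomSet H ∅ := fun v _ => (h.false v).elim
    have : gamma H ≤ 0 := by
      have := Nat.sInf_le (s := {n | ∃ S : Finset β, IsDomSet H S ∧ S.card = n})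
        ⟨∅, h0, Finset.card_empty⟩
      exact this
    omega
  obtain ⟨x₀⟩ := hβ
  constructor
  · -- lower bound
    obtain ⟨S, hS, hcard⟩ := exists_gamma_set (lexProd G H)
    rw [← hcard]
    have hdom : IsDomSet G (S.image Prod.fst) := by
      intro v hv
      have hvx : (v, x₀) ∉ S := fun hmem =>
        hv (Finset.mem_image.mpr ⟨(v, x₀), hmem, rfl⟩)
      obtain ⟨⟨u, y⟩, huS, hadj⟩ := hS (v, x₀) hvx
      rcases hadj with h | ⟨rfl, h⟩
      · exact ⟨u, Finset.mem_image.mpr ⟨(u, y), huS, rfl⟩, h⟩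
      · exact absurd (Finset.mem_image.mpr ⟨(u, y), huS, rfl⟩) hv
    calc gamma G ≤ (S.image Prod.fst).card := gamma_le_card G hdom
      _ ≤ S.card := Finset.card_image_le
  · -- upper bound
    have hiotane : {n | ∃ D : Finset α, IsDomSet G D ∧ D.card = gamma G ∧
        iotaSet G D = n}.Nonempty := by
      obtain ⟨D, hD, hDc⟩ := exists_gamma_set G
      exact ⟨iotaSet G D, D, hD, hDc, rfl⟩
    obtain ⟨D, hD, hDc, hDi⟩ := Nat.sInf_mem hiotane
    have hmonne : {n | ∃ U : Finset α, IsMonitorSet G U D ∧ U.card = n}.Nonempty :=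
      ⟨Finset.univ.card, Finset.univ, fun v _ => Or.inl (Finset.mem_univ v), rfl⟩
    obtain ⟨U, hU, hUc⟩ := Nat.sInf_mem hmonne
    -- hUc : U.card = iotaSet G D
    set g : α → α := fun u => if u ∈ D then (hG u).choose else u with hg
    set U' : Finset α := U.image g with hU'
    set T : Finset (α × β) := (D ∪ U').image (fun a => (a, x₀)) with hT
    have hdomT : IsDomSet (lexProd G H) T := by
      rintro ⟨v, y⟩ hvy
      have hmemT : ∀ a ∈ D ∪ U', (a, x₀) ∈ T := fun a ha =>
        Finset.mem_image.mpr ⟨a, ha, rfl⟩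
      by_cases hvD : v ∈ D
      · rcases hU v hvD with hvU | ⟨u, huU, hadj⟩
        · refine ⟨(g v, x₀), hmemT _ (Finset.mem_union_right _
            (Finset.mem_image.mpr ⟨v, hvU, rfl⟩)), Or.inl ?_⟩
          simp only [hg, if_pos hvD]
          exact (hG v).choose_spec
        · by_cases huD : u ∈ D
          · exact ⟨(u, x₀), hmemT _ (Finset.mem_union_left _ huD), Or.inl hadj⟩
          · refine ⟨(u, x₀), hmemT _ (Finset.mem_union_right _
              (Finset.mem_image.mpr ⟨u, huU, ?_⟩)), Or.inl hadj⟩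
            simp [hg, huD]
      · obtain ⟨d, hd, hadj⟩ := hD v hvD
        exact ⟨(d, x₀), hmemT _ (Finset.mem_union_left _ hd), Or.inl hadj⟩
    have hiota_le : iota G ≤ iotaSet G D := Nat.sInf_le ⟨D, hD, hDc, hDi ▸ rfl⟩
    calc gamma (lexProd G H) ≤ T.card := gamma_le_card _ hdomT
      _ ≤ (D ∪ U').card := Finset.card_image_le
      _ ≤ D.card + U'.card := Finset.card_union_le _ _
      _ ≤ D.card + U.card := by
          have h1 : U'.card ≤ U.card := hU' ▸ Finset.card_image_le
          omega
      _ ≤ gamma G + iota G := by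
          have h2 : U.card = iota G := hUc.trans hDi
          rw [hDc, h2]
end

section
/- For every simple graph G and natural number n, the lexicographic product Fₙ[G] is isomorphic to the join G ∨ n(G ∨ G) of one copy of G with the disjoint union of n copies of the join G ∨ G, where Fₙ is the friendship graph. -/
/-- The join of two simple graphs: the disjoint union of `G` and `H` together with all
edges between vertices of `G` and vertices of `H`. -/
def joinG {α β : Type*} (G : SimpleGraph α) (H : SimpleGraph β) :
    SimpleGraph (α ⊕ β) where
  Adj u v := match u, v with
    | Sum.inl a, Sum.inl b => G.Adj a b
    | Sum.inr a, Sum.inr b => H.Adj a b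
    | _, _ => True
  symm := by constructor; rintro (a | a) (b | b) h <;> simp_all <;> exact h.symm
  loopless := by constructor; rintro (a | a) h <;> simp_all

/-- `nCopies n G` is the disjoint union of `n` copies of `G`: `(i, x)` is adjacent to
`(j, y)` iff `i = j` and `x` is adjacent to `y` in `G`. -/
def nCopies {α : Type*} (n : ℕ) (G : SimpleGraph α) : SimpleGraph (Fin n × α) where
  Adj p q := p.1 = q.1 ∧ G.Adj p.2 q.2
  symm := by constructor; rintro ⟨i, x⟩ ⟨j, y⟩ ⟨rfl, h⟩; exact ⟨rfl, h.symm⟩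
  loopless := by constructor; rintro ⟨i, x⟩ ⟨-, h⟩; exact G.loopless.irrefl x h

/-- The friendship graph `F_n`, obtained by identifying one vertex from each of `n`
triangles into the single common vertex `none`; the remaining vertices are `some (i, k)`,
where `i` indexes the triangle. -/
def friendshipG (n : ℕ) : SimpleGraph (Option (Fin n × Fin 2)) where
  Adj u v := u ≠ v ∧ (u = none ∨ v = none ∨ ∃ i k l, u = some (i, k) ∧ v = some (i, l))
  symm := by
    constructor
    rintro u v ⟨h1, h2 | h2 | ⟨i, k, l, hu, hv⟩⟩
    · exact ⟨h1.symm, Or.inr (Or.inl h2)⟩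
    · exact ⟨h1.symm, Or.inl h2⟩
    · exact ⟨h1.symm, Or.inr (Or.inr ⟨i, l, k, hv, hu⟩)⟩
  loopless := by constructor; rintro u ⟨h1, -⟩; exact h1 rfl


def fEquiv {α : Type*} (n : ℕ) :
    (Option (Fin n × Fin 2) × α) ≃ (α ⊕ Fin n × (α ⊕ α)) where
  toFun p := match p with
    | (none, x) => Sum.inl x
    | (some (i, ⟨0, _⟩), x) => Sum.inr (i, Sum.inl x)
    | (some (i, ⟨_ + 1, _⟩), x) => Sum.inr (i, Sum.inr x)
  invFun s := match s with
    | Sum.inl x => (none, x)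
    | Sum.inr (i, Sum.inl x) => (some (i, 0), x)
    | Sum.inr (i, Sum.inr x) => (some (i, 1), x)
  left_inv := by
    rintro ⟨_ | ⟨i, ⟨_ | _ | k, hk⟩⟩, x⟩
    · rfl
    · rfl
    · rfl
    · omega
  right_inv := by rintro (x | ⟨i, x | x⟩) <;> rfl

/-- `Fₙ[G]` is isomorphic to the join `G ∨ n(G ∨ G)` of one copy of `G` with the disjoint
union of `n` copies of the join `G ∨ G`. -/
theorem lexProd_friendship_iso_join {α : Type*} (G : SimpleGraph α) (n : ℕ) :
    Nonempty (lexProd (friendshipG n) G ≃g joinG G (nCopies n (joinG G G))) := by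
  refine ⟨⟨fEquiv n, ?_⟩⟩
  rintro ⟨_ | ⟨i, ⟨_ | _ | k, hk⟩⟩, x⟩ ⟨_ | ⟨j, ⟨_ | _ | l, hl⟩⟩, y⟩ <;>
    first
    | omega
    | (dsimp only [fEquiv, Equiv.coe_fn_mk]
       simp [lexProd, joinG, nCopies, friendshipG, Fin.ext_iff, Fin.exists_fin_two]
       try omega
       try exact ⟨fun h => ⟨i, rfl, by omega⟩, fun ⟨m, h1, h2⟩ => by omega⟩)
end
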